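/- Let Δ ⊂ ℝ^d be a d-dimensional lattice polytope containing 0 in its interior. Then Δ^{FI} = {0} if and only if 0 is interior to Δ and Δ is contained in some pseudoreflexive polytope. -/

import Mathlib

open Finset Pointwise MeasureTheory
noncomputable section

variable {d : ℕ}

/-- Standard pairing on ℝ^d. -/
def pairR (x y : Fin d → ℝ) : ℝ := ∑ i, x i * y i

/-- Embedding of ℤ^d into ℝ^d. -/
def toR (n : Fin d → ℤ) : Fin d → ℝ := fun i => (n i : ℝ)

/-- A point of ℝ^d with integer coordinates. -/
def IsLatticePoint (x : Fin d → ℝ) : Prop := ∀ i, ∃ z : ℤ, x i = (z : ℝ)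

/-- ord_Δ(y) = min_{x ∈ Δ} ⟨x, y⟩. -/
def ordP (Δ : Set (Fin d → ℝ)) (y : Fin d → ℝ) : ℝ := sInf ((fun x => pairR x y) '' Δ)

/-- The Fine interior of Δ. -/
def fineInterior (Δ : Set (Fin d → ℝ)) : Set (Fin d → ℝ) :=
  {x | ∀ n : Fin d → ℤ, n ≠ 0 → ordP Δ (toR n) + 1 ≤ pairR x (toR n)}

/-- A lattice polytope: the convex hull of finitely many lattice points. -/
def IsLatticePolytope (Δ : Set (Fin d → ℝ)) : Prop :=
  ∃ S : Finset (Fin d → ℤ), Δ = convexHull ℝ (toR '' (S : Set (Fin d → ℤ)))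

/-- The polar set Δ* = {y : ⟨x,y⟩ ≥ -1 for all x ∈ Δ}. -/
def polarSet (Δ : Set (Fin d → ℝ)) : Set (Fin d → ℝ) :=
  {y | ∀ x ∈ Δ, -1 ≤ pairR x y}

/-- [P] = convex hull of the lattice points of P. -/
def latticeHull (P : Set (Fin d → ℝ)) : Set (Fin d → ℝ) :=
  convexHull ℝ {x ∈ P | IsLatticePoint x}

/-- Pseudoreflexive polytope: Fine interior {0} and Δ = [[Δ*]*]. -/
def IsPseudoreflexive (Δ : Set (Fin d → ℝ)) : Prop :=
  IsLatticePolytope Δ ∧ fineInterior Δ = {0} ∧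
    Δ = latticeHull (polarSet (latticeHull (polarSet Δ)))

/-- (Exposed) face of Δ cut out by a supporting linear functional. -/
def IsFaceOf (Δ F : Set (Fin d → ℝ)) : Prop :=
  ∃ y : Fin d → ℝ, F = {x ∈ Δ | pairR x y = ordP Δ y}

/-- Dimension of a subset of ℝ^d. -/
def dimSet (S : Set (Fin d → ℝ)) : ℕ := Module.finrank ℝ ↥(vectorSpan ℝ S)

/-- The face of the polar polytope dual to a face F of Δ. -/
def dualFace (Δ F : Set (Fin d → ℝ)) : Set (Fin d → ℝ) :=
  {y ∈ polarSet Δ | ∀ x ∈ F, pairR x y = -1}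

/-- The cone ℝ_{≥0}·Θ over a set Θ. -/
def coneOver (Θ : Set (Fin d → ℝ)) : Set (Fin d → ℝ) :=
  {x | ∃ c : ℝ, 0 ≤ c ∧ ∃ p ∈ Θ, x = c • p}

/-- A face Θ is ordinary if every lattice point of ℝ_{≥0}Θ lies in some dilate lΘ. -/
def IsOrdinaryFace (Θ : Set (Fin d → ℝ)) : Prop :=
  ∀ n : Fin d → ℤ, toR n ∈ coneOver Θ → ∃ l : ℕ, toR n ∈ (l : ℝ) • Θ

/-- Facet: a face of dimension d-1. -/
def IsFacet (Δ Θ : Set (Fin d → ℝ)) : Prop :=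
  IsFaceOf Δ Θ ∧ dimSet Θ + 1 = d

/-- for a d-dimensional lattice polytope containing 0 in its interior,
Δ^{FI} = {0} iff 0 is interior to Δ and Δ is contained in some pseudoreflexive polytope. -/
lemma pairR_comm (x y : Fin d → ℝ) : pairR x y = pairR y x := by
  unfold pairR; exact Finset.sum_congr rfl fun i _ => mul_comm _ _

lemma pairR_zero_left (y : Fin d → ℝ) : pairR 0 y = 0 := by simp [pairR]

lemma pairR_zero_right (x : Fin d → ℝ) : pairR x 0 = 0 := by simp [pairR]

lemma pairR_smul_left (c : ℝ) (x y : Fin d → ℝ) : pairR (c • x) y = c * pairR x y := by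
  unfold pairR; rw [Finset.mul_sum]; exact Finset.sum_congr rfl fun i _ => by
    simp [Pi.smul_apply, smul_eq_mul]; ring

lemma pairR_smul_right (c : ℝ) (x y : Fin d → ℝ) : pairR x (c • y) = c * pairR x y := by
  rw [pairR_comm, pairR_smul_left, pairR_comm]

lemma pairR_add_left (x x' y : Fin d → ℝ) : pairR (x + x') y = pairR x y + pairR x' y := by
  unfold pairR; rw [← Finset.sum_add_distrib]; exact Finset.sum_congr rfl fun i _ => by
    simp [Pi.add_apply]; ring

lemma pairR_add_right (x y y' : Fin d → ℝ) : pairR x (y + y') = pairR x y + pairR x y' := by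
  rw [pairR_comm, pairR_add_left, pairR_comm x y, pairR_comm x y']

lemma isLinearMap_pairR (y : Fin d → ℝ) : IsLinearMap ℝ (fun x => pairR x y) :=
  ⟨fun a b => pairR_add_left a b y, fun c a => by simp [pairR_smul_left, smul_eq_mul]⟩

lemma continuous_pairR_right (m : Fin d → ℝ) : Continuous (fun v => pairR m v) := by
  unfold pairR
  exact continuous_finset_sum _ fun i _ => (continuous_const.mul (continuous_apply i))

lemma isLatticePoint_zero : IsLatticePoint (0 : Fin d → ℝ) := fun i => ⟨0, by simp⟩

lemma isLatticePoint_toR (n : Fin d → ℤ) : IsLatticePoint (toR n) := fun i => ⟨n i, rfl⟩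

lemma latticePoints_eq_image (P : Set (Fin d → ℝ)) :
    {x ∈ P | IsLatticePoint x} = toR '' {n | toR n ∈ P} := by
  ext x
  constructor
  · rintro ⟨hxP, hlat⟩
    refine ⟨fun i => (hlat i).choose, ?_, ?_⟩
    · show toR _ ∈ P
      convert hxP using 1
      funext i; exact ((hlat i).choose_spec).symm
    · funext i; exact ((hlat i).choose_spec).symm
  · rintro ⟨n, hn, rfl⟩
    exact ⟨hn, isLatticePoint_toR n⟩

lemma ord_isLeast {S : Finset (Fin d → ℤ)} (hS : S.Nonempty) (y : Fin d → ℝ) :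
    IsLeast ((fun x => pairR x y) '' (convexHull ℝ (toR '' (S : Set (Fin d → ℤ)))))
      (S.inf' hS (fun s => pairR (toR s) y)) := by
  constructor
  · obtain ⟨s, hs, hv⟩ := S.exists_mem_eq_inf' hS (fun s => pairR (toR s) y)
    exact ⟨toR s, subset_convexHull ℝ _ ⟨s, hs, rfl⟩, hv.symm⟩
  · rintro r ⟨x, hx, rfl⟩
    have h : convexHull ℝ (toR '' (S : Set (Fin d → ℤ))) ⊆
        {z | S.inf' hS (fun s => pairR (toR s) y) ≤ pairR z y} := by
      apply convexHull_min
      · rintro z ⟨s, hs, rfl⟩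
        exact Finset.inf'_le (fun s => pairR (toR s) y) hs
      · exact convex_halfSpace_ge (isLinearMap_pairR y) _
    exact h hx

lemma ordP_eq {S : Finset (Fin d → ℤ)} (hS : S.Nonempty) (y : Fin d → ℝ) :
    ordP (convexHull ℝ (toR '' (S : Set (Fin d → ℤ)))) y
      = S.inf' hS (fun s => pairR (toR s) y) :=
  (ord_isLeast hS y).csInf_eq

lemma ord_le_pair {S : Finset (Fin d → ℤ)} (hS : S.Nonempty) (y : Fin d → ℝ)
    {x : Fin d → ℝ} (hx : x ∈ convexHull ℝ (toR '' (S : Set (Fin d → ℤ)))) :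
    ordP (convexHull ℝ (toR '' (S : Set (Fin d → ℤ)))) y ≤ pairR x y := by
  rw [ordP_eq hS y]
  exact (ord_isLeast hS y).2 ⟨x, hx, rfl⟩

lemma le_ord {Δ : Set (Fin d → ℝ)} {y : Fin d → ℝ} {c : ℝ} (hne : Δ.Nonempty)
    (h : ∀ x ∈ Δ, c ≤ pairR x y) : c ≤ ordP Δ y := by
  apply le_csInf (hne.image _)
  rintro r ⟨x, hx, rfl⟩; exact h x hx

lemma ord_int {S : Finset (Fin d → ℤ)} (hS : S.Nonempty) (n : Fin d → ℤ) :
    ∃ z : ℤ, ordP (convexHull ℝ (toR '' (S : Set (Fin d → ℤ)))) (toR n) = (z : ℝ) := by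
  obtain ⟨s, hs, hv⟩ := S.exists_mem_eq_inf' hS (fun s => pairR (toR s) (toR n))
  refine ⟨∑ i, s i * n i, ?_⟩
  rw [ordP_eq hS, hv]
  unfold pairR toR
  push_cast
  rfl

lemma sign_mul_self_int (k : ℤ) : (Int.sign k) * k = |k| := by
  rcases lt_trichotomy k 0 with h | h | h
  · rw [Int.sign_eq_neg_one_of_neg h, abs_of_neg h]; ring
  · simp [h]
  · rw [Int.sign_eq_one_of_pos h, abs_of_pos h]; ring

lemma ball_subset_of_interior {Δ : Set (Fin d → ℝ)} (h0 : (0 : Fin d → ℝ) ∈ interior Δ) :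
    ∃ ε : ℝ, 0 < ε ∧ ∀ z : Fin d → ℝ, ‖z‖ < ε → z ∈ Δ := by
  rw [mem_interior_iff_mem_nhds, Metric.mem_nhds_iff] at h0
  obtain ⟨ε, hε, hball⟩ := h0
  exact ⟨ε, hε, fun z hz => hball (mem_ball_zero_iff.mpr hz)⟩

/-- ord bound: ord_Δ(n) ≤ -(ε/2) ∑ |nᵢ|. -/
lemma ord_le_negS {S : Finset (Fin d → ℤ)} (hS : S.Nonempty) {ε : ℝ} (hε : 0 < ε)
    (hball : ∀ z : Fin d → ℝ, ‖z‖ < ε → z ∈ convexHull ℝ (toR '' (S : Set (Fin d → ℤ))))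
    (n : Fin d → ℤ) :
    ordP (convexHull ℝ (toR '' (S : Set (Fin d → ℤ)))) (toR n)
      ≤ -(ε/2) * ∑ i, |(n i : ℝ)| := by
  set x : Fin d → ℝ := fun j => -(ε/2) * (Int.sign (n j) : ℝ) with hx
  have hxmem : x ∈ convexHull ℝ (toR '' (S : Set (Fin d → ℤ))) := by
    apply hball
    rw [pi_norm_lt_iff hε]
    intro i
    rw [hx, Real.norm_eq_abs, abs_mul]
    have h1 : |(Int.sign (n i) : ℝ)| ≤ 1 := by
      rcases lt_trichotomy (n i) 0 with h | h | h
      · rw [Int.sign_eq_neg_one_of_neg h]; norm_num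
      · rw [h]; norm_num
      · rw [Int.sign_eq_one_of_pos h]; norm_num
    have : |-(ε/2)| = ε/2 := by rw [abs_neg, abs_of_pos (by linarith)]
    rw [this]
    nlinarith
  have hpair : pairR x (toR n) = -(ε/2) * ∑ i, |(n i : ℝ)| := by
    unfold pairR
    rw [Finset.mul_sum]
    apply Finset.sum_congr rfl
    intro i _
    have : ((Int.sign (n i) : ℝ)) * ((n i : ℝ)) = |(n i : ℝ)| := by
      have := sign_mul_self_int (n i)
      have h2 : ((Int.sign (n i) * n i : ℤ) : ℝ) = ((|n i| : ℤ) : ℝ) := by rw [this]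
      push_cast at h2
      exact h2
    show x i * (toR n) i = -(ε/2) * |(n i : ℝ)|
    rw [hx]
    show -(ε/2) * (Int.sign (n i) : ℝ) * ((n i : ℝ)) = _
    rw [mul_assoc, this]
  rw [← hpair]
  exact ord_le_pair hS _ hxmem

lemma sumabs_ge_one {n : Fin d → ℤ} (hn : n ≠ 0) : (1:ℝ) ≤ ∑ i, |(n i : ℝ)| := by
  have : ∃ i, n i ≠ 0 := by
    by_contra h
    push_neg at h
    exact hn (funext h)
  obtain ⟨i, hi⟩ := this
  have h1 : (1:ℝ) ≤ |(n i : ℝ)| := by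
    have := Int.one_le_abs hi
    calc (1:ℝ) ≤ ((|n i| : ℤ) : ℝ) := by exact_mod_cast this
    _ = |(n i : ℝ)| := by push_cast; rfl
  calc (1:ℝ) ≤ |(n i : ℝ)| := h1
  _ ≤ ∑ j, |(n j : ℝ)| :=
    Finset.single_le_sum (f := fun j => |(n j : ℝ)|) (fun j _ => abs_nonneg _) (Finset.mem_univ i)

lemma zero_mem_fineInterior {S : Finset (Fin d → ℤ)} (hS : S.Nonempty) {ε : ℝ} (hε : 0 < ε)
    (hball : ∀ z : Fin d → ℝ, ‖z‖ < ε → z ∈ convexHull ℝ (toR '' (S : Set (Fin d → ℤ)))) :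
    (0 : Fin d → ℝ) ∈ fineInterior (convexHull ℝ (toR '' (S : Set (Fin d → ℤ)))) := by
  intro n hn
  rw [pairR_zero_left]
  obtain ⟨z, hz⟩ := ord_int hS n
  have hle : ordP (convexHull ℝ (toR '' (S : Set (Fin d → ℤ)))) (toR n) ≤ -(ε/2) := by
    calc ordP (convexHull ℝ (toR '' (S : Set (Fin d → ℤ)))) (toR n)
        ≤ -(ε/2) * ∑ i, |(n i : ℝ)| := ord_le_negS hS hε hball n
      _ ≤ -(ε/2) * 1 := by
          apply mul_le_mul_of_nonpos_left (sumabs_ge_one hn) (by linarith)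
      _ = -(ε/2) := by ring
  have hzlt : (z:ℝ) < 0 := by rw [← hz] at *; linarith
  have hzle : z ≤ -1 := by
    have : z < 0 := by exact_mod_cast hzlt
    omega
  rw [hz]
  have : (z:ℝ) ≤ -1 := by exact_mod_cast hzle
  linarith

/-- Key Lemma A: if Δ^FI = {0} and v pairs nonnegatively with every lattice point of Δ*,
then v = 0. -/
lemma key_vanish {S : Finset (Fin d → ℤ)} (hS : S.Nonempty) {ε : ℝ} (hε : 0 < ε)
    (hball : ∀ z : Fin d → ℝ, ‖z‖ < ε → z ∈ convexHull ℝ (toR '' (S : Set (Fin d → ℤ))))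
    (hFI : fineInterior (convexHull ℝ (toR '' (S : Set (Fin d → ℤ)))) = {0})
    (v : Fin d → ℝ)
    (hv : ∀ m : Fin d → ℤ, toR m ∈ polarSet (convexHull ℝ (toR '' (S : Set (Fin d → ℤ))))
      → 0 ≤ pairR v (toR m)) :
    v = 0 := by
  set Δ := convexHull ℝ (toR '' (S : Set (Fin d → ℤ))) with hΔ
  set M : ℝ := ∑ i, |v i| with hM
  have hM0 : 0 ≤ M := Finset.sum_nonneg fun i _ => abs_nonneg _
  set t : ℝ := (ε/2) / (2 * (M + 1)) with ht
  have ht0 : 0 < t := by positivity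
  have htM : t * M ≤ (ε/2) / 2 := by
    rw [ht]
    rw [div_mul_eq_mul_div, div_le_div_iff₀ (by positivity) (by norm_num)]
    nlinarith
  have hmem : t • v ∈ fineInterior Δ := by
    intro n hn
    set Sn : ℝ := ∑ i, |(n i : ℝ)| with hSn
    have hSn0 : (1:ℝ) ≤ Sn := sumabs_ge_one hn
    have hbound : |pairR (t • v) (toR n)| ≤ t * M * Sn := by
      have h1 : |pairR (t • v) (toR n)| ≤ ∑ i, |t * v i * (n i : ℝ)| := by
        rw [pairR]
        calc |∑ i, (t • v) i * (toR n) i| ≤ ∑ i, |(t • v) i * (toR n) i| :=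
          Finset.abs_sum_le_sum_abs _ _
        _ = ∑ i, |t * v i * (n i : ℝ)| := by
          apply Finset.sum_congr rfl; intro i _
          simp [Pi.smul_apply, smul_eq_mul, toR, mul_assoc]
      have h2 : ∀ i, |t * v i * (n i : ℝ)| ≤ t * |v i| * Sn := by
        intro i
        rw [abs_mul, abs_mul, abs_of_pos ht0]
        have : |(n i : ℝ)| ≤ Sn :=
          Finset.single_le_sum (f := fun j => |(n j : ℝ)|)
            (fun j _ => abs_nonneg _) (Finset.mem_univ i)
        have hv0 : 0 ≤ t * |v i| := by positivity
        calc t * |v i| * |(n i : ℝ)| ≤ t * |v i| * Sn := by nlinarith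
        _ = t * |v i| * Sn := rfl
      calc |pairR (t • v) (toR n)| ≤ ∑ i, |t * v i * (n i : ℝ)| := h1
        _ ≤ ∑ i, t * |v i| * Sn := Finset.sum_le_sum (fun i _ => h2 i)
        _ = (∑ i, |v i|) * (t * Sn) := by
            rw [Finset.sum_mul]
            exact Finset.sum_congr rfl fun i _ => by ring
        _ = t * M * Sn := by rw [hM]; ring
    obtain ⟨z, hz⟩ := ord_int hS n
    have hordS : ordP Δ (toR n) ≤ -(ε/2) * Sn := ord_le_negS hS hε hball n
    have hzneg : z ≤ -1 := by
      have h1 : (z:ℝ) ≤ -(ε/2) * Sn := by rw [← hz]; exact hordS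
      have h2 : (z:ℝ) < 0 := by nlinarith
      have : z < 0 := by exact_mod_cast h2
      omega
    rcases eq_or_lt_of_le hzneg with heq | hlt
    · -- ord = -1 : n is a lattice point of the polar
      have hzr : (z:ℝ) = -1 := by rw [heq]; norm_num
      have hpol : toR n ∈ polarSet Δ := by
        intro x hx
        have h := ord_le_pair hS (toR n) hx
        rw [hz, hzr] at h
        exact h
      have h0 := hv n hpol
      have hps : pairR (t • v) (toR n) = t * pairR v (toR n) := pairR_smul_left t v (toR n)
      rw [hz, hzr]
      nlinarith
    · -- ord ≤ -2
      have hz2 : (z:ℝ) ≤ -2 := by exact_mod_cast (by omega : z ≤ -2)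
      have c1 : ordP Δ (toR n) + 1 ≤ ordP Δ (toR n) / 2 := by rw [hz]; linarith
      have c2 : ordP Δ (toR n) / 2 ≤ -(ε/2) * Sn / 2 := by linarith
      have c3 : -(ε/2) * Sn / 2 ≤ -(t * M) * Sn := by nlinarith
      have c4 : -(t * M) * Sn ≤ pairR (t • v) (toR n) := by
        have := abs_le.mp hbound
        linarith [this.1]
      linarith
  rw [hFI] at hmem
  have := Set.mem_singleton_iff.mp hmem
  have := smul_eq_zero.mp this
  rcases this with h | h
  · exact absurd h (ne_of_gt ht0)
  · exact h

/-! ### Polarity formalities -/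

lemma zero_mem_polar (P : Set (Fin d → ℝ)) : (0 : Fin d → ℝ) ∈ polarSet P := by
  intro x hx; rw [pairR_zero_right]; norm_num

lemma polar_antitone {A B : Set (Fin d → ℝ)} (h : A ⊆ B) : polarSet B ⊆ polarSet A :=
  fun y hy x hx => hy x (h hx)

lemma subset_bipolar (A : Set (Fin d → ℝ)) : A ⊆ polarSet (polarSet A) := by
  intro x hx y hy
  rw [pairR_comm]
  exact hy x hx

lemma convex_polar (A : Set (Fin d → ℝ)) : Convex ℝ (polarSet A) := by
  intro y1 hy1 y2 hy2 a b ha hb hab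
  intro x hx
  have h1 := hy1 x hx
  have h2 := hy2 x hx
  have : pairR x (a • y1 + b • y2) = a * pairR x y1 + b * pairR x y2 := by
    rw [pairR_add_right, pairR_smul_right, pairR_smul_right]
  rw [this]
  nlinarith

lemma latticeHull_subset {P : Set (Fin d → ℝ)} (hP : Convex ℝ P) : latticeHull P ⊆ P :=
  convexHull_min (fun x hx => hx.1) hP

lemma latticeHull_mono {A B : Set (Fin d → ℝ)} (h : A ⊆ B) : latticeHull A ⊆ latticeHull B :=
  convexHull_mono (fun x hx => ⟨h hx.1, hx.2⟩)

/-- F P := latticeHull (polarSet P). -/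
lemma F_antitone {A B : Set (Fin d → ℝ)} (h : A ⊆ B) :
    latticeHull (polarSet B) ⊆ latticeHull (polarSet A) :=
  latticeHull_mono (polar_antitone h)

lemma latticeHull_eq_hull_toR (P : Set (Fin d → ℝ)) :
    latticeHull P = convexHull ℝ (toR '' {n | toR n ∈ P}) := by
  unfold latticeHull
  rw [latticePoints_eq_image]

/-- Any convex hull of lattice points is contained in its double-F. -/
lemma hull_subset_FF {T : Set (Fin d → ℤ)} {P : Set (Fin d → ℝ)}
    (hP : P = convexHull ℝ (toR '' T)) :
    P ⊆ latticeHull (polarSet (latticeHull (polarSet P))) := by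
  have h1 : latticeHull (polarSet P) ⊆ polarSet P := latticeHull_subset (convex_polar P)
  have h2 : polarSet (polarSet P) ⊆ polarSet (latticeHull (polarSet P)) := polar_antitone h1
  have h3 : toR '' T ⊆ {x ∈ polarSet (latticeHull (polarSet P)) | IsLatticePoint x} := by
    rintro x ⟨n, hn, rfl⟩
    refine ⟨h2 (subset_bipolar P ?_), isLatticePoint_toR n⟩
    rw [hP]
    exact subset_convexHull ℝ _ ⟨n, hn, rfl⟩
  calc P = convexHull ℝ (toR '' T) := hP
    _ ⊆ convexHull ℝ {x ∈ polarSet (latticeHull (polarSet P)) | IsLatticePoint x} :=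
        convexHull_mono h3
    _ = latticeHull (polarSet (latticeHull (polarSet P))) := rfl

lemma FFF_eq_F {T : Set (Fin d → ℤ)} {P : Set (Fin d → ℝ)}
    (hP : P = convexHull ℝ (toR '' T)) :
    latticeHull (polarSet (latticeHull (polarSet (latticeHull (polarSet P)))))
      = latticeHull (polarSet P) := by
  apply Set.Subset.antisymm
  · exact F_antitone (hull_subset_FF hP)
  · exact hull_subset_FF (latticeHull_eq_hull_toR (polarSet P))

lemma continuous_inf' {ι : Type*} {W : Finset ι} (hW : W.Nonempty)
    (f : ι → (Fin d → ℝ) → ℝ) (hf : ∀ m, Continuous (f m)) :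
    Continuous (fun v => W.inf' hW (fun m => f m v)) := by
  induction hW using Finset.Nonempty.cons_induction with
  | singleton a => simpa using hf a
  | cons a s ha hs ih =>
    have : (fun v => (Finset.cons a s ha).inf' (Finset.cons_nonempty ha) (fun m => f m v))
        = fun v => min (f a v) (s.inf' hs (fun m => f m v)) := by
      funext v
      rw [Finset.inf'_cons]
    rw [this]
    exact (hf a).min ih

/-- If the "dual cone" of W is trivial then {y | ∀ m ∈ W, ⟨m,y⟩ ≥ -1} is bounded. -/
lemma bdd_of_dual_trivial (W : Finset (Fin d → ℝ)) (hW : W.Nonempty)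
    (hD : ∀ v : Fin d → ℝ, (∀ m ∈ W, 0 ≤ pairR m v) → v = 0) :
    ∃ R : ℝ, ∀ y : Fin d → ℝ, (∀ m ∈ W, -1 ≤ pairR m y) → ‖y‖ ≤ R := by
  by_cases hzero : ∀ y : Fin d → ℝ, y = 0
  · exact ⟨0, fun y _ => by rw [hzero y]; simp⟩
  push_neg at hzero
  obtain ⟨y0, hy0⟩ := hzero
  have hsph : (Metric.sphere (0 : Fin d → ℝ) 1).Nonempty := by
    refine ⟨‖y0‖⁻¹ • y0, ?_⟩
    rw [Metric.mem_sphere, dist_zero_right, norm_smul, norm_inv, norm_norm]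
    rw [inv_mul_cancel₀ (norm_ne_zero_iff.mpr hy0)]
  set f : (Fin d → ℝ) → ℝ := fun v => W.inf' hW (fun m => pairR m v) with hf
  have hcont : Continuous f := continuous_inf' hW _ (fun m => continuous_pairR_right m)
  obtain ⟨v0, hv0mem, hv0max⟩ := (isCompact_sphere (0 : Fin d → ℝ) 1).exists_isMaxOn hsph
    hcont.continuousOn
  set c : ℝ := f v0 with hc
  have hcneg : c < 0 := by
    have hv0ne : v0 ≠ 0 := by
      intro h
      rw [Metric.mem_sphere, dist_zero_right, h] at hv0mem
      simp at hv0mem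
    by_contra hpos
    push_neg at hpos
    apply hv0ne
    apply hD
    intro m hm
    calc (0:ℝ) ≤ c := hpos
      _ ≤ pairR m v0 := Finset.inf'_le _ hm
  refine ⟨1 / (-c), ?_⟩
  intro y hy
  by_cases hyz : y = 0
  · rw [hyz]
    simp only [norm_zero]
    exact le_of_lt (div_pos one_pos (by linarith))
  have hyn : (0:ℝ) < ‖y‖ := norm_pos_iff.mpr hyz
  set v : Fin d → ℝ := ‖y‖⁻¹ • y with hv
  have hvmem : v ∈ Metric.sphere (0 : Fin d → ℝ) 1 := by
    rw [Metric.mem_sphere, dist_zero_right, hv, norm_smul, norm_inv, norm_norm,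
      inv_mul_cancel₀ (ne_of_gt hyn)]
  have hfv : f v ≤ c := hv0max hvmem
  obtain ⟨m, hm, hmv⟩ := W.exists_mem_eq_inf' hW (fun m => pairR m v)
  have h1 : pairR m v ≤ c := by rw [← hmv]; exact hfv
  have h2 : pairR m y = ‖y‖ * pairR m v := by
    rw [hv, pairR_smul_right]
    field_simp
  have h3 : -1 ≤ pairR m y := hy m hm
  rw [h2] at h3
  -- -1 ≤ ‖y‖ * pairR m v ≤ ‖y‖ * c, c < 0 ⇒ ‖y‖ ≤ 1/(-c)
  have h4 : -1 ≤ ‖y‖ * c := le_trans h3 (by nlinarith)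
  rw [le_div_iff₀ (by linarith : (0:ℝ) < -c)]
  nlinarith

lemma finite_lattice_of_bounded {P : Set (Fin d → ℝ)} {R : ℝ} (h : ∀ y ∈ P, ‖y‖ ≤ R) :
    {n : Fin d → ℤ | toR n ∈ P}.Finite := by
  set N : ℤ := ⌈R⌉ with hN
  apply Set.Finite.subset (Finset.Icc (fun _ : Fin d => -N) (fun _ => N)).finite_toSet
  intro n hn
  simp only [Finset.coe_Icc, Set.mem_Icc]
  have hb : ∀ i, |(n i : ℝ)| ≤ R := by
    intro i
    have := norm_le_pi_norm (toR n) i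
    rw [Real.norm_eq_abs] at this
    exact le_trans this (h _ hn)
  constructor
  · intro i
    have h1 : ((-N : ℤ) : ℝ) ≤ (n i : ℝ) := by
      have := (abs_le.mp (hb i)).1
      have h2 : R ≤ (N:ℝ) := Int.le_ceil R
      push_cast
      linarith
    exact_mod_cast h1
  · intro i
    have h1 : ((n i : ℝ)) ≤ ((N : ℤ) : ℝ) := by
      have := (abs_le.mp (hb i)).2
      have h2 : R ≤ (N:ℝ) := Int.le_ceil R
      push_cast
      linarith
    exact_mod_cast h1

lemma polar_bounded {Δ : Set (Fin d → ℝ)} {ε : ℝ} (hε : 0 < ε)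
    (hball : ∀ z : Fin d → ℝ, ‖z‖ < ε → z ∈ Δ) :
    ∀ y ∈ polarSet Δ, ‖y‖ ≤ 2/ε := by
  intro y hy
  rw [pi_norm_le_iff_of_nonneg (by positivity)]
  intro i
  rw [Real.norm_eq_abs, abs_le]
  have key : ∀ s : ℝ, |s| ≤ 1 → -1 ≤ (s * (ε/2)) * y i := by
    intro s hs
    set x : Fin d → ℝ := fun j => if j = i then s * (ε/2) else 0 with hx
    have hxmem : x ∈ Δ := by
      apply hball
      rw [pi_norm_lt_iff hε]
      intro j
      by_cases hj : j = i
      · have hxj : x j = s * (ε/2) := by rw [hx]; simp [hj]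
        rw [hxj, Real.norm_eq_abs, abs_mul]
        have h5 : |ε/2| = ε/2 := abs_of_pos (by linarith)
        rw [h5]
        nlinarith
      · have hxj : x j = 0 := by rw [hx]; simp [hj]
        rw [hxj]
        simpa using hε
    have := hy x hxmem
    have hpx : pairR x y = (s * (ε/2)) * y i := by
      rw [pairR, hx]
      rw [Finset.sum_eq_single i]
      · simp
      · intro j _ hj; simp [hj]
      · intro hi; exact absurd (Finset.mem_univ i) hi
    rw [hpx] at this
    exact this
  have hk1 : -1 ≤ (ε/2) * y i := by nlinarith [key 1 (by norm_num)]
  have hk2 : (ε/2) * y i ≤ 1 := by nlinarith [key (-1) (by norm_num)]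
  constructor
  · rw [neg_le, le_div_iff₀ hε]
    nlinarith
  · rw [le_div_iff₀ hε]
    nlinarith

lemma toR_zero : toR (0 : Fin d → ℤ) = (0 : Fin d → ℝ) := by
  funext i; simp [toR]


theorem stmt8 {d : ℕ} (Δ : Set (Fin d → ℝ)) (h1 : IsLatticePolytope Δ)
    (h2 : (interior Δ).Nonempty) (h0 : (0 : Fin d → ℝ) ∈ interior Δ) :
    fineInterior Δ = {0} ↔
      ((0 : Fin d → ℝ) ∈ interior Δ ∧
        ∃ Δ' : Set (Fin d → ℝ), IsPseudoreflexive Δ' ∧ Δ ⊆ Δ') := by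
  obtain ⟨S, hΔS⟩ := h1
  subst hΔS
  set Δ : Set (Fin d → ℝ) := convexHull ℝ (toR '' (S : Set (Fin d → ℤ))) with hΔdef
  have h0Δ : (0 : Fin d → ℝ) ∈ Δ := interior_subset h0
  have hS : S.Nonempty := by
    rcases S.eq_empty_or_nonempty with h | h
    · exfalso
      rw [hΔdef, h] at h0Δ
      simp at h0Δ
    · exact h
  obtain ⟨ε, hε, hball⟩ := ball_subset_of_interior h0
  constructor
  · -- forward direction
    intro hFI
    refine ⟨h0, ?_⟩
    set Pol : Set (Fin d → ℝ) := polarSet Δ with hPol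
    have hPolBdd : ∀ y ∈ Pol, ‖y‖ ≤ 2/ε := polar_bounded hε hball
    have hAfin : {n : Fin d → ℤ | toR n ∈ Pol}.Finite := finite_lattice_of_bounded hPolBdd
    set FΔ : Set (Fin d → ℝ) := latticeHull Pol with hFΔ
    have hFΔeq : FΔ = convexHull ℝ (toR '' {n | toR n ∈ Pol}) := latticeHull_eq_hull_toR Pol
    have hmemF : ∀ m : Fin d → ℤ, toR m ∈ Pol → toR m ∈ FΔ := by
      intro m hm
      rw [hFΔeq]
      exact subset_convexHull ℝ _ ⟨m, hm, rfl⟩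
    -- the dual-cone triviality
    set W : Finset (Fin d → ℝ) := hAfin.toFinset.image toR with hW
    have hA0 : (0 : Fin d → ℤ) ∈ hAfin.toFinset := by
      rw [Set.Finite.mem_toFinset]
      show toR 0 ∈ Pol
      rw [toR_zero]
      exact zero_mem_polar Δ
    have hWne : W.Nonempty := ⟨toR 0, Finset.mem_image_of_mem toR hA0⟩
    have hD : ∀ v : Fin d → ℝ, (∀ m ∈ W, 0 ≤ pairR m v) → v = 0 := by
      intro v hv
      apply key_vanish hS hε hball hFI v
      intro m hm
      rw [pairR_comm]
      exact hv (toR m) (Finset.mem_image_of_mem toR (hAfin.mem_toFinset.mpr hm))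
    obtain ⟨R, hR⟩ := bdd_of_dual_trivial W hWne hD
    have hQbdd : ∀ y ∈ polarSet FΔ, ‖y‖ ≤ R := by
      intro y hy
      apply hR
      intro m hm
      obtain ⟨n, hn, rfl⟩ := Finset.mem_image.mp hm
      exact hy (toR n) (hmemF n (hAfin.mem_toFinset.mp hn))
    have hA'fin : {n : Fin d → ℤ | toR n ∈ polarSet FΔ}.Finite :=
      finite_lattice_of_bounded hQbdd
    set Δ' : Set (Fin d → ℝ) := latticeHull (polarSet FΔ) with hΔ'
    have hΔ'eq : Δ' = convexHull ℝ (toR '' ((hA'fin.toFinset : Finset (Fin d → ℤ)) :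
        Set (Fin d → ℤ))) := by
      rw [hΔ', latticeHull_eq_hull_toR, Set.Finite.coe_toFinset]
    have hpoly' : IsLatticePolytope Δ' := ⟨hA'fin.toFinset, hΔ'eq⟩
    have hsub : Δ ⊆ Δ' := hull_subset_FF rfl
    have hbip : latticeHull (polarSet (latticeHull (polarSet Δ'))) = Δ' :=
      FFF_eq_F (latticeHull_eq_hull_toR Pol)
    have hA'ne : hA'fin.toFinset.Nonempty := by
      refine ⟨0, ?_⟩
      rw [Set.Finite.mem_toFinset]
      show toR 0 ∈ polarSet FΔ
      rw [toR_zero]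
      exact zero_mem_polar FΔ
    have hball' : ∀ z : Fin d → ℝ, ‖z‖ < ε →
        z ∈ convexHull ℝ (toR '' ((hA'fin.toFinset : Finset (Fin d → ℤ)) :
          Set (Fin d → ℤ))) := by
      intro z hz
      rw [← hΔ'eq]
      exact hsub (hball z hz)
    have hFI0 : (0 : Fin d → ℝ) ∈ fineInterior Δ' := by
      rw [hΔ'eq]
      exact zero_mem_fineInterior hA'ne hε hball'
    have hFIsub : fineInterior Δ' ⊆ {0} := by
      intro x hx
      have hx0 : x = 0 := by
        apply key_vanish hS hε hball hFI x
        intro m hm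
        by_cases hm0 : m = 0
        · subst hm0
          rw [toR_zero, pairR_zero_right]
        · have hord : (-1 : ℝ) ≤ ordP Δ' (toR m) := by
            apply le_ord ⟨0, hsub h0Δ⟩
            intro y hy
            have hyQ : y ∈ polarSet FΔ := latticeHull_subset (convex_polar FΔ) hy
            have := hyQ (toR m) (hmemF m hm)
            rw [pairR_comm]
            exact this
          have hfi := hx m hm0
          linarith
      rw [hx0]
      rfl
    have hFI' : fineInterior Δ' = {0} :=
      Set.Subset.antisymm hFIsub (Set.singleton_subset_iff.mpr hFI0)
    exact ⟨Δ', ⟨hpoly', hFI', hbip.symm⟩, hsub⟩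
  · -- backward direction
    rintro ⟨-, Δ', ⟨⟨S', hS'd⟩, hFI', -⟩, hsub⟩
    have hS'ne : S'.Nonempty := by
      rcases S'.eq_empty_or_nonempty with h | h
      · exfalso
        rw [h] at hS'd
        simp at hS'd
        exact absurd (hS'd ▸ hsub h0Δ) (Set.notMem_empty 0)
      · exact h
    apply Set.Subset.antisymm
    · intro x hx
      have hxFI' : x ∈ fineInterior Δ' := by
        intro n hn
        have hord : ordP Δ' (toR n) ≤ ordP Δ (toR n) := by
          apply csInf_le_csInf
          · rw [hS'd]
            exact ⟨_, (ord_isLeast hS'ne (toR n)).2⟩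
          · exact ⟨pairR 0 (toR n), 0, h0Δ, rfl⟩
          · exact Set.image_mono hsub
        have := hx n hn
        linarith
      rw [hFI'] at hxFI'
      exact hxFI'
    · rw [Set.singleton_subset_iff]
      exact zero_mem_fineInterior hS hε hball
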